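/- Let p₁, p₂ and k be positive integers and let P, Q be real polynomials satisfying P(z) − e^{−z} = O(z^{p₁+1}) and Q(z) − e^{−z} = O(z^{p₂+1}) as real z → 0. Then for every n and every real n×n matrix L, the matrix Q(−k·h·L) − (P(−h·L))^k (polynomial evaluation at matrices) has operator norm O(h^{min(p₁,p₂)+1}) as h → 0⁺. -/

import Mathlib

open Filter Topology Asymptotics Polynomial

attribute [local instance] Matrix.linftyOpNormedAddCommGroup Matrix.linftyOpNormedRing
attribute [local instance] Matrix.linftyOpNormedSpace

private lemma pow_isBigO_pow_nhds {a b : ℕ} (hab : a ≤ b) :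
    (fun z : ℝ => z ^ b) =O[𝓝 (0:ℝ)] fun z => z ^ a := by
  rw [Asymptotics.isBigO_iff]
  refine ⟨1, ?_⟩
  have h1 : ∀ᶠ z : ℝ in 𝓝 0, |z| ≤ 1 := by
    filter_upwards [Metric.ball_mem_nhds (0:ℝ) one_pos] with z hz
    simpa [Real.dist_eq] using (mem_ball_iff_norm.mp hz).le
  filter_upwards [h1] with z hz
  simp only [Real.norm_eq_abs, abs_pow, one_mul]
  exact pow_le_pow_of_le_one (abs_nonneg z) hz hab

private lemma coeff_eq_zero_of_isBigO_aux (m : ℕ) (D : Polynomial ℝ)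
    (hD : (fun z : ℝ => D.eval z) =O[𝓝[≠] (0:ℝ)] fun z => z ^ (m + 1)) :
    D.coeff 0 = 0 := by
  have hz : Filter.Tendsto (fun z : ℝ => z ^ (m+1)) (𝓝[≠] (0:ℝ)) (𝓝 0) := by
    have h1 := (continuous_pow (m+1)).tendsto (0:ℝ)
    rw [zero_pow (Nat.succ_ne_zero m)] at h1
    exact h1.mono_left nhdsWithin_le_nhds
  have h1 : Filter.Tendsto (fun z : ℝ => D.eval z) (𝓝[≠] (0:ℝ)) (𝓝 0) :=
    hD.trans_tendsto hz
  have h2 : Filter.Tendsto (fun z : ℝ => D.eval z) (𝓝[≠] (0:ℝ)) (𝓝 (D.eval 0)) :=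
    (D.continuous.tendsto 0).mono_left nhdsWithin_le_nhds
  rw [Polynomial.coeff_zero_eq_eval_zero]
  exact tendsto_nhds_unique h2 h1

private lemma coeff_eq_zero_of_isBigO : ∀ (m : ℕ) (D : Polynomial ℝ),
    (fun z : ℝ => D.eval z) =O[𝓝[≠] (0:ℝ)] (fun z => z ^ (m + 1)) →
    ∀ j ≤ m, D.coeff j = 0 := by
  intro m
  induction m with
  | zero =>
    intro D hD j hj
    obtain rfl := Nat.le_zero.mp hj
    exact coeff_eq_zero_of_isBigO_aux 0 D hD
  | succ m ih =>
    intro D hD j hj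
    have hc0 : D.coeff 0 = 0 := coeff_eq_zero_of_isBigO_aux _ D hD
    have hDeval : ∀ z : ℝ, D.eval z = D.divX.eval z * z := by
      intro z
      conv_lhs => rw [← D.divX_mul_X_add]
      simp [hc0]
    have hdiv : (fun z : ℝ => D.divX.eval z) =O[𝓝[≠] (0:ℝ)] fun z => z ^ (m + 1) := by
      rw [Asymptotics.isBigO_iff] at hD ⊢
      obtain ⟨C, hC⟩ := hD
      refine ⟨C, ?_⟩
      filter_upwards [hC, self_mem_nhdsWithin] with z hz hz0
      have hz0' : z ≠ 0 := hz0
      have hzpos : (0:ℝ) < |z| := abs_pos.mpr hz0'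
      rw [hDeval z] at hz
      rw [Real.norm_eq_abs, abs_mul, Real.norm_eq_abs, abs_pow] at hz
      rw [Real.norm_eq_abs, Real.norm_eq_abs, abs_pow]
      have hps : |z| ^ (m + 1 + 1) = |z| ^ (m+1) * |z| := pow_succ _ _
      rw [hps, ← mul_assoc] at hz
      exact le_of_mul_le_mul_right hz hzpos
    cases j with
    | zero => exact hc0
    | succ i =>
      rw [← Polynomial.coeff_divX]
      exact ih D.divX hdiv i (Nat.succ_le_succ_iff.mp hj)

private lemma aeval_scale {A : Type*} [Ring A] [Algebra ℝ A] (c : ℝ) (x : A)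
    (Q : Polynomial ℝ) :
    Polynomial.aeval x (Polynomial.aeval (Polynomial.C c * Polynomial.X) Q)
      = Polynomial.aeval (c • x) Q := by
  rw [← Polynomial.aeval_algHom_apply (Polynomial.aeval x)
        (Polynomial.C c * Polynomial.X) Q]
  congr 1
  simp [Algebra.smul_def]

/-- Matrix form of the paper's Lemma on `Ψ - Φ^k` for polynomial (explicit Runge-Kutta)
stability functions: if `P(z) - e^{-z} = O(z^{p₁+1})` and `Q(z) - e^{-z} = O(z^{p₂+1})`
as `z → 0`, then for every real `n × n` matrix `L`, the matrix
`Q(-k·h·L) - (P(-h·L))^k` has (operator) norm `O(h^{min(p₁,p₂)+1})` as `h → 0⁺`. -/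
theorem stmt_1 (p₁ p₂ k : ℕ) (hp₁ : 0 < p₁) (hp₂ : 0 < p₂) (hk : 0 < k)
    (P Q : Polynomial ℝ)
    (hP : (fun z : ℝ => P.eval z - Real.exp (-z)) =O[𝓝 0] fun z : ℝ => z ^ (p₁ + 1))
    (hQ : (fun z : ℝ => Q.eval z - Real.exp (-z)) =O[𝓝 0] fun z : ℝ => z ^ (p₂ + 1)) :
    ∀ (n : ℕ) (L : Matrix (Fin n) (Fin n) ℝ),
      (fun h : ℝ =>
          (Polynomial.aeval ((-((k : ℝ) * h)) • L)) Q -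
            ((Polynomial.aeval ((-h) • L)) P) ^ k)
        =O[𝓝[>] 0] fun h : ℝ => h ^ (min p₁ p₂ + 1) := by
  set m := min p₁ p₂ with hm
  set D : Polynomial ℝ :=
    Polynomial.aeval (Polynomial.C (k:ℝ) * Polynomial.X) Q - P ^ k with hDdef
  -- scalar estimates
  have hkz : Filter.Tendsto (fun z : ℝ => (k:ℝ) * z) (𝓝 0) (𝓝 0) := by
    simpa using (continuous_mul_left (k:ℝ)).tendsto (0:ℝ)
  have hQ' : (fun z : ℝ => Q.eval ((k:ℝ)*z) - Real.exp (-((k:ℝ)*z)))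
      =O[𝓝 (0:ℝ)] fun z : ℝ => z ^ (m+1) := by
    have h1 := hQ.comp_tendsto hkz
    simp only [Function.comp_def] at h1
    have hr : (fun z : ℝ => ((k:ℝ)*z) ^ (p₂+1)) =O[𝓝 (0:ℝ)] fun z => z ^ (p₂+1) := by
      simp only [mul_pow]
      exact (isBigO_refl _ _).const_mul_left _
    exact (h1.trans hr).trans (pow_isBigO_pow_nhds (by omega))
  have hexp : ∀ z : ℝ, Real.exp (-((k:ℝ)*z)) = Real.exp (-z) ^ k := by
    intro z
    rw [← Real.exp_nat_mul, mul_neg]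
  have hcont : Continuous (fun z : ℝ =>
      ∑ i ∈ Finset.range k, (P.eval z)^i * (Real.exp (-z))^(k-1-i)) := by
    refine continuous_finset_sum _ fun i _ => ?_
    exact ((P.continuous).pow i).mul ((Real.continuous_exp.comp continuous_neg).pow _)
  have hbound : (fun z : ℝ =>
      ∑ i ∈ Finset.range k, (P.eval z)^i * (Real.exp (-z))^(k-1-i))
      =O[𝓝 (0:ℝ)] (fun _ => (1:ℝ)) :=
    (hcont.tendsto 0).isBigO_one ℝ
  have hP' : (fun z : ℝ => (P.eval z)^k - Real.exp (-((k:ℝ)*z)))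
      =O[𝓝 (0:ℝ)] fun z : ℝ => z ^ (m+1) := by
    have key : ∀ z : ℝ, (P.eval z)^k - Real.exp (-((k:ℝ)*z)) =
        (∑ i ∈ Finset.range k, (P.eval z)^i * (Real.exp (-z))^(k-1-i))
          * (P.eval z - Real.exp (-z)) := by
      intro z
      rw [hexp z, geom_sum₂_mul]
    have h3 := hbound.mul hP
    simp only [one_mul] at h3
    have h4 := h3.trans (pow_isBigO_pow_nhds (show m + 1 ≤ p₁ + 1 by omega))
    simpa only [← key] using h4
  have hDeval : ∀ z : ℝ, D.eval z = Q.eval ((k:ℝ)*z) - (P.eval z)^k := by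
    intro z
    rw [hDdef]
    rw [Polynomial.eval_sub, Polynomial.eval_pow]
    congr 1
    rw [← Polynomial.coe_aeval_eq_eval z, aeval_scale (k:ℝ) z Q, smul_eq_mul,
      Polynomial.coe_aeval_eq_eval]
  have hD : (fun z : ℝ => D.eval z) =O[𝓝 (0:ℝ)] fun z : ℝ => z ^ (m+1) := by
    have h5 := hQ'.sub hP'
    refine h5.congr_left fun z => ?_
    rw [hDeval z]
    ring
  have hcoeff : ∀ j ≤ m, D.coeff j = 0 :=
    coeff_eq_zero_of_isBigO m D (hD.mono nhdsWithin_le_nhds)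
  obtain ⟨E, hE⟩ : (Polynomial.X : Polynomial ℝ)^(m+1) ∣ D := by
    rw [Polynomial.X_pow_dvd_iff]
    intro d hd
    exact hcoeff d (by omega)
  intro n L
  have hfun : ∀ h : ℝ,
      (Polynomial.aeval ((-((k : ℝ) * h)) • L)) Q -
        ((Polynomial.aeval ((-h) • L)) P) ^ k
      = (-h)^(m+1) • (L^(m+1) * Polynomial.aeval ((-h) • L) E) := by
    intro h
    have harg : (-((k:ℝ) * h)) • L = (k:ℝ) • ((-h) • L) := by
      rw [smul_smul, mul_neg]
    have h1 : Polynomial.aeval ((-((k : ℝ) * h)) • L) Q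
        = Polynomial.aeval ((-h) • L)
            (Polynomial.aeval (Polynomial.C (k:ℝ) * Polynomial.X) Q) := by
      rw [harg]
      exact (aeval_scale _ _ _).symm
    have h2 : ((Polynomial.aeval ((-h) • L)) P) ^ k
        = Polynomial.aeval ((-h) • L) (P ^ k) := (map_pow _ _ _).symm
    rw [h1, h2, ← map_sub, ← hDdef, hE, map_mul, map_pow, Polynomial.aeval_X,
      _root_.smul_pow, smul_mul_assoc]
  have hcontG : Continuous (fun h : ℝ => L^(m+1) * Polynomial.aeval ((-h) • L) E) := by
    exact continuous_const.mul
      ((Polynomial.continuous_aeval E).comp (continuous_neg.smul continuous_const))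
  have hG : (fun h : ℝ => L^(m+1) * Polynomial.aeval ((-h) • L) E)
      =O[𝓝[>] (0:ℝ)] (fun _ => (1:ℝ)) :=
    ((hcontG.tendsto 0).mono_left nhdsWithin_le_nhds).isBigO_one ℝ
  have hco : (fun h : ℝ => (-h)^(m+1)) =O[𝓝[>] (0:ℝ)] fun h => h^(m+1) := by
    refine Asymptotics.isBigO_iff.mpr ⟨1, Filter.Eventually.of_forall fun h => ?_⟩
    simp [Real.norm_eq_abs, abs_pow]
  have hfinal := hco.smul hG
  simp only [smul_eq_mul, mul_one] at hfinal
  have heq : (fun h : ℝ =>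
      (Polynomial.aeval ((-((k : ℝ) * h)) • L)) Q -
        ((Polynomial.aeval ((-h) • L)) P) ^ k)
      = fun h : ℝ => (-h)^(m+1) • (L^(m+1) * Polynomial.aeval ((-h) • L) E) :=
    funext hfun
  rw [heq]
  exact hfinal
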